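/- Laplace-expansion identity: for an $n\times n$ matrix $X$, ordered index sets $I=\{i_1,\dots,i_r\}$, $J=\{j_1,\dots,j_r\}$, and indices $\alpha,\beta$, one has $\sum_{p=1}^r x_{i_p\beta}\,X_{I(i_p\to\alpha)}^{J}=x_{\alpha\beta}X_I^J - X_{(\alpha I)}^{(\beta J)}$, where $X_I^J=\det(x_{i_p j_q})_{p,q=1}^r$, $I(i_p\to\alpha)$ replaces $i_p$ by $\alpha$ in $I$, and $(\alpha I)$, $(\beta J)$ prepend $\alpha$ to $I$ and $\beta$ to $J$. -/
import Mathlib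


/-- Laplace-expansion identity
`∑ₚ x_{iₚβ} X_{I(iₚ→α)}^J = x_{αβ} X_I^J − X_{(αI)}^{(βJ)}`. -/
theorem stmt10 {R : Type*} [CommRing R] {n r : ℕ} (X : Matrix (Fin n) (Fin n) R)
    (I J : Fin r → Fin n) (α β : Fin n) :
    (∑ p : Fin r, X (I p) β *
        Matrix.det (Matrix.of fun p' q : Fin r => X (Function.update I p α p') (J q)))
      = X α β * Matrix.det (Matrix.of fun p q : Fin r => X (I p) (J q))
        - Matrix.det (Matrix.of fun p q : Fin (r + 1) =>
            X ((Fin.cons α I : Fin (r + 1) → Fin n) p)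
              ((Fin.cons β J : Fin (r + 1) → Fin n) q)) := by
  have key : ∀ p : Fin r,
      Matrix.det (Matrix.of fun p' q : Fin r => X (Function.update I p α p') (J q))
        = (-1 : R) ^ (p : ℕ) *
          Matrix.det (Matrix.of fun p' q : Fin r =>
            X ((Fin.cons α I : Fin (r + 1) → Fin n) (p.succ.succAbove p')) (J q)) := by
    intro p
    have hperm := Matrix.det_permute (Fin.cycleRange p)
      (Matrix.of fun p' q : Fin r =>
        X ((Fin.cons α I : Fin (r + 1) → Fin n) (p.succ.succAbove p')) (J q))
    have hM : ((Matrix.of fun p' q : Fin r =>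
          X ((Fin.cons α I : Fin (r + 1) → Fin n) (p.succ.succAbove p')) (J q)).submatrix
            (⇑(Fin.cycleRange p)) id)
        = (Matrix.of fun p' q : Fin r => X (Function.update I p α p') (J q)) := by
      funext p' q
      simp only [Matrix.submatrix_apply, Matrix.of_apply, id, Fin.succAbove_cycleRange]
      rcases eq_or_ne p' p with rfl | h
      · simp [Equiv.swap_apply_right]
      · rw [Equiv.swap_apply_of_ne_of_ne (Fin.succ_ne_zero p')
          (fun hc => h (Fin.succ_injective _ hc))]
        simp [Function.update_of_ne h]
    rw [hM] at hperm
    rw [hperm, Fin.sign_cycleRange]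
    simp [mul_assoc]
  rw [Matrix.det_succ_column_zero, Fin.sum_univ_succ]
  simp only [Matrix.of_apply, Fin.cons_zero, Fin.cons_succ, Fin.val_zero, pow_zero, one_mul,
    Fin.val_succ]
  have : ∀ p : Fin r,
      (-1 : R) ^ ((p : ℕ) + 1) * X (I p) β *
        Matrix.det ((Matrix.of fun p' q : Fin (r+1) =>
          X ((Fin.cons α I : Fin (r + 1) → Fin n) p')
            ((Fin.cons β J : Fin (r + 1) → Fin n) q)).submatrix p.succ.succAbove Fin.succ)
      = - (X (I p) β *
          Matrix.det (Matrix.of fun p' q : Fin r => X (Function.update I p α p') (J q))) := by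
    intro p
    have hsub : (Matrix.of fun p' q : Fin (r+1) =>
          X ((Fin.cons α I : Fin (r + 1) → Fin n) p')
            ((Fin.cons β J : Fin (r + 1) → Fin n) q)).submatrix p.succ.succAbove Fin.succ
        = Matrix.of fun p' q : Fin r =>
            X ((Fin.cons α I : Fin (r + 1) → Fin n) (p.succ.succAbove p')) (J q) := by
      funext p' q; simp [Matrix.submatrix]
    have hodd : Odd ((p : ℕ) + 1 + (p : ℕ)) := ⟨(p : ℕ), by ring⟩
    have h1 : (-1 : R) ^ ((p : ℕ) + 1) * (-1) ^ (p : ℕ) = -1 := by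
      rw [← pow_add, hodd.neg_one_pow]
    have h2 : (-1 : R) ^ ((p : ℕ) * 2) = 1 := by
      rw [mul_comm, pow_mul]; norm_num
    rw [hsub, key p]
    linear_combination (X (I p) β *
        Matrix.det (Matrix.of fun p' q : Fin r => X (Function.update I p α p') (J q))) * h1
      + (X (I p) β *
        Matrix.det (Matrix.of fun p' q : Fin r => X (Function.update I p α p') (J q))) * h2
  rw [Finset.sum_congr rfl (fun p _ => this p)]
  have hsub0 : (Matrix.of fun p' q : Fin (r+1) =>
        X ((Fin.cons α I : Fin (r + 1) → Fin n) p')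
          ((Fin.cons β J : Fin (r + 1) → Fin n) q)).submatrix (Fin.succAbove 0) Fin.succ
      = Matrix.of fun p q : Fin r => X (I p) (J q) := by
    funext p q; simp [Matrix.submatrix]
  rw [hsub0, Finset.sum_neg_distrib]
  ring
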